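/- arXiv:0902.4127 — 7 statements merged into one kernel-verified Lean document; each statement's English description precedes it below -/
import Mathlib

section
/- The square loss function λ(γ,ω) = (ω-γ)² is 2-mixable: the image of its superprediction set under the map E₂(x,y) = (e^{-2x}, e^{-2y}) is convex. -/
open Set


lemma hoeffding_two_point (a : ℝ) (ha : 0 ≤ a) (ha1 : a ≤ 1) (s : ℝ) :
    1 - a + a * Real.exp s ≤ Real.exp (a * s + s ^ 2 / 8) := by
  have hg : ∀ x : ℝ, 0 < 1 - a + a * Real.exp x := by
    intro x
    rcases eq_or_lt_of_le ha1 with h | h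
    · subst h; simpa using Real.exp_pos x
    · nlinarith [Real.exp_pos x, mul_nonneg ha (Real.exp_pos x).le]
  set F : ℝ → ℝ := fun x => a * x + x ^ 2 / 8 - Real.log (1 - a + a * Real.exp x) with hFdef
  set G : ℝ → ℝ := fun x => a + x / 4 - a * Real.exp x / (1 - a + a * Real.exp x) with hGdef
  have hgd : ∀ x : ℝ, HasDerivAt (fun y : ℝ => 1 - a + a * Real.exp y) (a * Real.exp x) x := by
    intro x
    simpa using ((Real.hasDerivAt_exp x).const_mul a).const_add (1 - a)
  have hF : ∀ x : ℝ, HasDerivAt F (G x) x := by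
    intro x
    have h2 : HasDerivAt (fun y : ℝ => Real.log (1 - a + a * Real.exp y))
        (a * Real.exp x / (1 - a + a * Real.exp x)) x := (hgd x).log (hg x).ne'
    have h3 : HasDerivAt (fun y : ℝ => a * y + y ^ 2 / 8) (a + x / 4) x := by
      have : HasDerivAt (fun y : ℝ => a * y + y ^ 2 / 8) (a * 1 + ((2:ℕ):ℝ) * x ^ (2 - 1) / 8) x :=
        ((hasDerivAt_id x).const_mul a).add ((hasDerivAt_pow 2 x).div_const 8)
      convert this using 1
      ring
    exact h3.sub h2
  have hG : ∀ x : ℝ, HasDerivAt G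
      (1 / 4 - (a * Real.exp x * (1 - a + a * Real.exp x) -
        a * Real.exp x * (a * Real.exp x)) / (1 - a + a * Real.exp x) ^ 2) x := by
    intro x
    have hdiv : HasDerivAt (fun y : ℝ => a * Real.exp y / (1 - a + a * Real.exp y))
        ((a * Real.exp x * (1 - a + a * Real.exp x) -
          a * Real.exp x * (a * Real.exp x)) / (1 - a + a * Real.exp x) ^ 2) x :=
      ((Real.hasDerivAt_exp x).const_mul a).div (hgd x) (hg x).ne'
    have hlin : HasDerivAt (fun y : ℝ => a + y / 4) (1 / 4) x := by
      simpa using ((hasDerivAt_id x).div_const 4).const_add a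
    exact hlin.sub hdiv
  have hGnonneg : ∀ x : ℝ, 0 ≤ 1 / 4 - (a * Real.exp x * (1 - a + a * Real.exp x) -
      a * Real.exp x * (a * Real.exp x)) / (1 - a + a * Real.exp x) ^ 2 := by
    intro x
    rw [sub_nonneg, div_le_iff₀ (pow_pos (hg x) 2)]
    nlinarith [sq_nonneg (1 - a - a * Real.exp x)]
  have hGmono : Monotone G :=
    monotone_of_deriv_nonneg (fun x => (hG x).differentiableAt)
      (fun x => by rw [(hG x).deriv]; exact hGnonneg x)
  have hG0 : G 0 = 0 := by simp [hGdef]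
  have hF0 : F 0 = 0 := by simp [hFdef]
  have hFc : Continuous F := by
    have : Differentiable ℝ F := fun x => (hF x).differentiableAt
    exact this.continuous
  have key : ∀ x : ℝ, 0 ≤ F x := by
    intro x
    rcases le_total 0 x with hx | hx
    · have hmono : MonotoneOn F (Set.Ici 0) := by
        refine monotoneOn_of_deriv_nonneg (convex_Ici 0) hFc.continuousOn
          (fun y _ => (hF y).differentiableAt.differentiableWithinAt) (fun y hy => ?_)
        rw [(hF y).deriv]
        have : (0:ℝ) ≤ y := le_of_lt (by simpa using hy)
        calc (0:ℝ) = G 0 := hG0.symm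
          _ ≤ G y := hGmono this
      have := hmono (Set.self_mem_Ici) (Set.mem_Ici.mpr hx) hx
      rwa [hF0] at this
    · have hanti : AntitoneOn F (Set.Iic 0) := by
        refine antitoneOn_of_deriv_nonpos (convex_Iic 0) hFc.continuousOn
          (fun y _ => (hF y).differentiableAt.differentiableWithinAt) (fun y hy => ?_)
        rw [(hF y).deriv]
        have : y ≤ (0:ℝ) := le_of_lt (by simpa using hy)
        calc G y ≤ G 0 := hGmono this
          _ = 0 := hG0
      have := hanti (Set.mem_Iic.mpr hx) (Set.self_mem_Iic) hx
      rwa [hF0] at this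
  have hx := key s
  have hlog : Real.log (1 - a + a * Real.exp s) ≤ a * s + s ^ 2 / 8 := by
    have : F s = a * s + s ^ 2 / 8 - Real.log (1 - a + a * Real.exp s) := rfl
    linarith [hx, this ▸ hx]
  calc 1 - a + a * Real.exp s = Real.exp (Real.log (1 - a + a * Real.exp s)) :=
        (Real.exp_log (hg s)).symm
    _ ≤ Real.exp (a * s + s ^ 2 / 8) := Real.exp_le_exp.mpr hlog

lemma tangent_line (a γ : ℝ) (ha : 0 ≤ a) (ha1 : a ≤ 1) :
    a * Real.exp (-2*(1-γ)^2) + (1-a) * (Real.exp (4*a-2) * Real.exp (-2*γ^2))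
      ≤ Real.exp (-2*(1-a)^2) := by
  have hH := hoeffding_two_point a ha ha1 (4*(γ-a))
  have hE : (0:ℝ) < Real.exp (-(a*(4*(γ-a)) + (4*(γ-a))^2/8) + -2*(1-a)^2) := Real.exp_pos _
  have h1 : Real.exp (-2*(1-γ)^2)
      = Real.exp (4*(γ-a)) * Real.exp (-(a*(4*(γ-a)) + (4*(γ-a))^2/8) + -2*(1-a)^2) := by
    rw [← Real.exp_add]; congr 1; ring
  have h2 : Real.exp (4*a-2) * Real.exp (-2*γ^2)
      = Real.exp (-(a*(4*(γ-a)) + (4*(γ-a))^2/8) + -2*(1-a)^2) := by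
    rw [← Real.exp_add]; congr 1; ring
  have h3 : Real.exp (a*(4*(γ-a)) + (4*(γ-a))^2/8) *
      Real.exp (-(a*(4*(γ-a)) + (4*(γ-a))^2/8) + -2*(1-a)^2) = Real.exp (-2*(1-a)^2) := by
    rw [← Real.exp_add]; congr 1; ring
  calc a * Real.exp (-2*(1-γ)^2) + (1-a) * (Real.exp (4*a-2) * Real.exp (-2*γ^2))
      = (1 - a + a * Real.exp (4*(γ-a))) *
        Real.exp (-(a*(4*(γ-a)) + (4*(γ-a))^2/8) + -2*(1-a)^2) := by rw [h1, h2]; ring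
    _ ≤ Real.exp (a*(4*(γ-a)) + (4*(γ-a))^2/8) *
        Real.exp (-(a*(4*(γ-a)) + (4*(γ-a))^2/8) + -2*(1-a)^2) :=
        mul_le_mul_of_nonneg_right hH hE.le
    _ = Real.exp (-2*(1-a)^2) := h3

lemma curve_combo (γ1 γ2 t1 t2 : ℝ) (hγ1 : γ1 ∈ Icc (0:ℝ) 1) (hγ2 : γ2 ∈ Icc (0:ℝ) 1)
    (ht1 : 0 ≤ t1) (ht2 : 0 ≤ t2) (hsum : t1 + t2 = 1) :
    ∃ γ ∈ Icc (0:ℝ) 1,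
      t1 * Real.exp (-2*γ1^2) + t2 * Real.exp (-2*γ2^2) ≤ Real.exp (-2*γ^2) ∧
      t1 * Real.exp (-2*(1-γ1)^2) + t2 * Real.exp (-2*(1-γ2)^2) ≤ Real.exp (-2*(1-γ)^2) := by
  obtain ⟨hγ1l, hγ1r⟩ := hγ1
  obtain ⟨hγ2l, hγ2r⟩ := hγ2
  set M1 := t1 * Real.exp (-2*γ1^2) + t2 * Real.exp (-2*γ2^2) with hM1
  set M2 := t1 * Real.exp (-2*(1-γ1)^2) + t2 * Real.exp (-2*(1-γ2)^2) with hM2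
  have he1 : Real.exp (-2*γ1^2) ≤ 1 := Real.exp_le_one_iff.mpr (by nlinarith [sq_nonneg γ1])
  have he2 : Real.exp (-2*γ2^2) ≤ 1 := Real.exp_le_one_iff.mpr (by nlinarith [sq_nonneg γ2])
  have hf1 : Real.exp (-2*(1-γ1)^2) ≤ 1 := Real.exp_le_one_iff.mpr (by nlinarith [sq_nonneg (1-γ1)])
  have hf2 : Real.exp (-2*(1-γ2)^2) ≤ 1 := Real.exp_le_one_iff.mpr (by nlinarith [sq_nonneg (1-γ2)])
  have hM1le1 : M1 ≤ 1 := by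
    calc M1 ≤ t1 * 1 + t2 * 1 := by
          apply add_le_add (mul_le_mul_of_nonneg_left he1 ht1) (mul_le_mul_of_nonneg_left he2 ht2)
      _ = 1 := by linarith
  have hM2le1 : M2 ≤ 1 := by
    calc M2 ≤ t1 * 1 + t2 * 1 := by
          apply add_le_add (mul_le_mul_of_nonneg_left hf1 ht1) (mul_le_mul_of_nonneg_left hf2 ht2)
      _ = 1 := by linarith
  have hM1pos : 0 < M1 := by
    rcases eq_or_lt_of_le ht1 with h | h
    · have ht2' : t2 = 1 := by linarith
      rw [hM1, ← h, ht2']; simpa using Real.exp_pos _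
    · nlinarith [Real.exp_pos (-2*γ1^2), Real.exp_pos (-2*γ2^2),
        mul_nonneg ht2 (Real.exp_pos (-2*γ2^2)).le]
  by_cases hcase1 : 1 ≤ M1
  · -- M1 = 1, take γ = 0
    refine ⟨0, ⟨le_refl 0, zero_le_one⟩, ?_, ?_⟩
    · simpa using hM1le1
    · have hM1eq : M1 = 1 := le_antisymm hM1le1 hcase1
      have hzero : t1 * (1 - Real.exp (-2*γ1^2)) + t2 * (1 - Real.exp (-2*γ2^2)) = 0 := by
        rw [hM1] at hM1eq; ring_nf; ring_nf at hM1eq; linarith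
      have h1n : 0 ≤ t1 * (1 - Real.exp (-2*γ1^2)) := mul_nonneg ht1 (by linarith)
      have h2n : 0 ≤ t2 * (1 - Real.exp (-2*γ2^2)) := mul_nonneg ht2 (by linarith)
      have key : ∀ t γ : ℝ, 0 ≤ t → 0 ≤ γ → t * (1 - Real.exp (-2*γ^2)) = 0 →
          t * Real.exp (-2*(1-γ)^2) ≤ t * Real.exp (-2) := by
        intro t γ htn hγn hz
        rcases mul_eq_zero.mp hz with h | h
        · rw [h]; simp
        · have : Real.exp (-2*γ^2) = 1 := by linarith
          have hγ0 : γ = 0 := by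
            have h2 : -2*γ^2 = 0 := by
              have hl := Real.log_exp (-2*γ^2)
              rw [this] at hl; simpa using hl.symm
            have hsq : γ^2 = 0 := by linarith
            have hle : γ ≤ 0 := by nlinarith
            exact le_antisymm hle hγn
          rw [hγ0]; norm_num
      have k1 : t1 * Real.exp (-2*(1-γ1)^2) ≤ t1 * Real.exp (-2) :=
        key t1 γ1 ht1 hγ1l (by linarith)
      have k2 : t2 * Real.exp (-2*(1-γ2)^2) ≤ t2 * Real.exp (-2) :=
        key t2 γ2 ht2 hγ2l (by linarith)
      have : M2 ≤ (t1 + t2) * Real.exp (-2) := by rw [hM2]; linarith [k1, k2]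
      rw [hsum, one_mul] at this
      calc M2 ≤ Real.exp (-2) := this
        _ = Real.exp (-2*(1-(0:ℝ))^2) := by norm_num
  · push_neg at hcase1
    by_cases hcase2 : M1 ≤ Real.exp (-2)
    · refine ⟨1, ⟨zero_le_one, le_refl 1⟩, ?_, ?_⟩
      · calc M1 ≤ Real.exp (-2) := hcase2
          _ = Real.exp (-2*(1:ℝ)^2) := by norm_num
      · calc M2 ≤ 1 := hM2le1
          _ = Real.exp (-2*(1-(1:ℝ))^2) := by norm_num
    · push_neg at hcase2
      set γ0 := Real.sqrt (Real.log M1 / (-2)) with hγ0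
      have hlogneg : Real.log M1 < 0 := Real.log_neg hM1pos hcase1
      have hloggt : -2 < Real.log M1 := by
        have := Real.log_lt_log (Real.exp_pos (-2)) hcase2
        rwa [Real.log_exp] at this
      have harg : 0 < Real.log M1 / (-2) := by
        apply div_pos_of_neg_of_neg hlogneg (by norm_num)
      have harglt : Real.log M1 / (-2) < 1 := by
        rw [div_lt_one_of_neg (by norm_num : (-2:ℝ) < 0)] at *
        · linarith
      have hγ0pos : 0 < γ0 := Real.sqrt_pos.mpr harg
      have hγ0lt1 : γ0 < 1 := by
        rw [hγ0, show (1:ℝ) = Real.sqrt 1 by simp]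
        exact Real.sqrt_lt_sqrt harg.le (by linarith)
      have hγ0sq : γ0^2 = Real.log M1 / (-2) := Real.sq_sqrt harg.le
      have hexpγ0 : Real.exp (-2*γ0^2) = M1 := by
        rw [hγ0sq]
        rw [show -2 * (Real.log M1 / (-2)) = Real.log M1 by ring]
        exact Real.exp_log hM1pos
      have t1ineq := tangent_line γ0 γ1 hγ0pos.le hγ0lt1.le
      have t2ineq := tangent_line γ0 γ2 hγ0pos.le hγ0lt1.le
      have hcomb : γ0 * M2 + (1-γ0) * (Real.exp (4*γ0-2) * M1) ≤ Real.exp (-2*(1-γ0)^2) := by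
        have c1 := mul_le_mul_of_nonneg_left t1ineq ht1
        have c2 := mul_le_mul_of_nonneg_left t2ineq ht2
        have expand : γ0 * (t1 * Real.exp (-2*(1-γ1)^2) + t2 * Real.exp (-2*(1-γ2)^2)) +
            (1-γ0) * (Real.exp (4*γ0-2) * (t1 * Real.exp (-2*γ1^2) + t2 * Real.exp (-2*γ2^2)))
            = t1 * (γ0 * Real.exp (-2*(1-γ1)^2) + (1-γ0) * (Real.exp (4*γ0-2) * Real.exp (-2*γ1^2)))
            + t2 * (γ0 * Real.exp (-2*(1-γ2)^2) + (1-γ0) * (Real.exp (4*γ0-2) * Real.exp (-2*γ2^2))) := by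
          ring
        have hsumR : t1 * Real.exp (-2*(1-γ0)^2) + t2 * Real.exp (-2*(1-γ0)^2)
            = Real.exp (-2*(1-γ0)^2) := by rw [← add_mul, hsum, one_mul]
        rw [hM1, hM2, expand]
        linarith [c1, c2]
      have hEM : Real.exp (4*γ0-2) * M1 = Real.exp (-2*(1-γ0)^2) := by
        rw [← hexpγ0, ← Real.exp_add]; congr 1; ring
      rw [hEM] at hcomb
      have hM2le : M2 ≤ Real.exp (-2*(1-γ0)^2) := by
        have h1 : γ0 * M2 ≤ γ0 * Real.exp (-2*(1-γ0)^2) := by linarith [hcomb]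
        exact le_of_mul_le_mul_left h1 hγ0pos
      exact ⟨γ0, ⟨hγ0pos.le, hγ0lt1.le⟩, le_of_eq hexpγ0.symm, hM2le⟩


/-- The square loss function is 2-mixable: the image of its superprediction set
`{(x,y) ∈ [0,∞)² : ∃ γ ∈ [0,1], γ² ≤ x ∧ (1-γ)² ≤ y}` under
`E₂(x,y) = (e^{-2x}, e^{-2y})` is convex. -/
theorem squareLoss_two_mixable :
    Convex ℝ ((fun p : ℝ × ℝ => (Real.exp (-2 * p.1), Real.exp (-2 * p.2))) ''
      {p : ℝ × ℝ | 0 ≤ p.1 ∧ 0 ≤ p.2 ∧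
        ∃ γ ∈ Icc (0:ℝ) 1, γ ^ 2 ≤ p.1 ∧ (1 - γ) ^ 2 ≤ p.2}) := by
  have himg : (fun p : ℝ × ℝ => (Real.exp (-2 * p.1), Real.exp (-2 * p.2))) ''
      {p : ℝ × ℝ | 0 ≤ p.1 ∧ 0 ≤ p.2 ∧
        ∃ γ ∈ Icc (0:ℝ) 1, γ ^ 2 ≤ p.1 ∧ (1 - γ) ^ 2 ≤ p.2}
      = {q : ℝ × ℝ | 0 < q.1 ∧ 0 < q.2 ∧
        ∃ γ ∈ Icc (0:ℝ) 1, q.1 ≤ Real.exp (-2*γ^2) ∧ q.2 ≤ Real.exp (-2*(1-γ)^2)} := by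
    ext ⟨u, v⟩
    constructor
    · rintro ⟨⟨x, y⟩, ⟨hx, hy, γ, hγ, h1, h2⟩, heq⟩
      obtain ⟨hu, hv⟩ := Prod.mk.injEq _ _ _ _ ▸ heq
      subst hu; subst hv
      refine ⟨Real.exp_pos _, Real.exp_pos _, γ, hγ, ?_, ?_⟩
      · exact Real.exp_le_exp.mpr (by dsimp only; nlinarith)
      · exact Real.exp_le_exp.mpr (by dsimp only; nlinarith)
    · rintro ⟨hu, hv, γ, hγ, h1, h2⟩
      refine ⟨(-Real.log u / 2, -Real.log v / 2), ⟨?_, ?_, γ, hγ, ?_, ?_⟩, ?_⟩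
      · dsimp only
        have : Real.log u ≤ -2*γ^2 := by
          have := Real.log_le_log hu h1
          rwa [Real.log_exp] at this
        nlinarith [sq_nonneg γ]
      · dsimp only
        have : Real.log v ≤ -2*(1-γ)^2 := by
          have := Real.log_le_log hv h2
          rwa [Real.log_exp] at this
        nlinarith [sq_nonneg (1-γ)]
      · dsimp only
        have : Real.log u ≤ -2*γ^2 := by
          have := Real.log_le_log hu h1
          rwa [Real.log_exp] at this
        linarith
      · dsimp only
        have : Real.log v ≤ -2*(1-γ)^2 := by
          have := Real.log_le_log hv h2
          rwa [Real.log_exp] at this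
        linarith
      · dsimp only
        rw [show -2 * (-Real.log u / 2) = Real.log u by ring,
          show -2 * (-Real.log v / 2) = Real.log v by ring,
          Real.exp_log hu, Real.exp_log hv]
  rw [himg]
  rintro ⟨u1, v1⟩ ⟨hu1, hv1, γ1, hγ1, hb1, hc1⟩ ⟨u2, v2⟩ ⟨hu2, hv2, γ2, hγ2, hb2, hc2⟩
    t1 t2 ht1 ht2 hsum
  obtain ⟨γ, hγ, hA, hB⟩ := curve_combo γ1 γ2 t1 t2 hγ1 hγ2 ht1 ht2 hsum
  have hfst : (t1 • (u1, v1) + t2 • (u2, v2) : ℝ × ℝ).1 = t1 * u1 + t2 * u2 := rfl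
  have hsnd : (t1 • (u1, v1) + t2 • (u2, v2) : ℝ × ℝ).2 = t1 * v1 + t2 * v2 := rfl
  refine ⟨?_, ?_, γ, hγ, ?_, ?_⟩
  · rw [hfst]
    rcases eq_or_lt_of_le ht1 with h | h
    · rw [← h]; have : t2 = 1 := by linarith
      rw [this]; simpa using hu2
    · nlinarith [mul_nonneg ht2 hu2.le]
  · rw [hsnd]
    rcases eq_or_lt_of_le ht1 with h | h
    · rw [← h]; have : t2 = 1 := by linarith
      rw [this]; simpa using hv2
    · nlinarith [mul_nonneg ht2 hv2.le]
  · rw [hfst]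
    calc t1 * u1 + t2 * u2 ≤ t1 * Real.exp (-2*γ1^2) + t2 * Real.exp (-2*γ2^2) :=
          add_le_add (mul_le_mul_of_nonneg_left hb1 ht1) (mul_le_mul_of_nonneg_left hb2 ht2)
      _ ≤ Real.exp (-2*γ^2) := hA
  · rw [hsnd]
    calc t1 * v1 + t2 * v2 ≤ t1 * Real.exp (-2*(1-γ1)^2) + t2 * Real.exp (-2*(1-γ2)^2) :=
          add_le_add (mul_le_mul_of_nonneg_left hc1 ht1) (mul_le_mul_of_nonneg_left hc2 ht2)
      _ ≤ Real.exp (-2*(1-γ)^2) := hB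
end

section
/- Let λ be an η-mixable proper loss function with finite losses on (0,1), and let π ∈ (0,1) and γ ∈ (0,1). Then π·exp(η(λ(π,1) - λ(γ,1))) + (1-π)·exp(η(λ(π,0) - λ(γ,0))) ≤ 1. -/
open ENNReal Set

/-- A loss function `l : [0,1] × {0,1} → [0,∞]` is a proper scoring rule. -/
def IsProper (l : ℝ → Bool → ℝ≥0∞) : Prop :=
  ∀ π ∈ Set.Icc (0:ℝ) 1, ∀ π' ∈ Set.Icc (0:ℝ) 1,
    ENNReal.ofReal π * l π true + ENNReal.ofReal (1 - π) * l π false ≤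
      ENNReal.ofReal π * l π' true + ENNReal.ofReal (1 - π) * l π' false

/-- The superprediction set of a loss function, as a subset of `[0,∞)² ⊆ ℝ²`. -/
def Superpred (l : ℝ → Bool → ℝ≥0∞) : Set (ℝ × ℝ) :=
  {p | 0 ≤ p.1 ∧ 0 ≤ p.2 ∧ ∃ γ ∈ Set.Icc (0:ℝ) 1,
    l γ false ≤ ENNReal.ofReal p.1 ∧ l γ true ≤ ENNReal.ofReal p.2}

/-- `l` is `η`-mixable if the image of its superprediction set under
`E_η(x,y) = (e^{-ηx}, e^{-ηy})` is convex. -/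
def Mixable (η : ℝ) (l : ℝ → Bool → ℝ≥0∞) : Prop :=
  Convex ℝ ((fun p : ℝ × ℝ => (Real.exp (-η * p.1), Real.exp (-η * p.2))) '' Superpred l)

/-- Key consequence of propriety: the expected loss of prediction `π` lower bounds the
`π`-expected value of any superprediction point. -/
lemma proper_key (l : ℝ → Bool → ℝ≥0∞) (hproper : IsProper l)
    (π : ℝ) (hπ : π ∈ Set.Ioo (0:ℝ) 1) (hfin : ∀ ω, l π ω ≠ ⊤)
    {x y : ℝ} (hxy : (x, y) ∈ Superpred l) :
    π * (l π true).toReal + (1 - π) * (l π false).toReal ≤ π * y + (1 - π) * x := by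
  obtain ⟨hx0, hy0, γ', hγ', h0, h1⟩ := hxy
  have hπ0 : (0:ℝ) ≤ π := hπ.1.le
  have hπ1 : (0:ℝ) ≤ 1 - π := by linarith [hπ.2]
  have h2 : ENNReal.ofReal π * l π true + ENNReal.ofReal (1 - π) * l π false ≤
      ENNReal.ofReal (π * y + (1 - π) * x) := by
    calc ENNReal.ofReal π * l π true + ENNReal.ofReal (1 - π) * l π false
        ≤ ENNReal.ofReal π * l γ' true + ENNReal.ofReal (1 - π) * l γ' false :=
          hproper π ⟨hπ0, hπ.2.le⟩ γ' hγ'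
      _ ≤ ENNReal.ofReal π * ENNReal.ofReal y + ENNReal.ofReal (1 - π) * ENNReal.ofReal x := by
          gcongr
      _ = ENNReal.ofReal (π * y + (1 - π) * x) := by
          rw [← ENNReal.ofReal_mul hπ0, ← ENNReal.ofReal_mul hπ1,
            ← ENNReal.ofReal_add (mul_nonneg hπ0 hy0) (mul_nonneg hπ1 hx0)]
  have hne1 : ENNReal.ofReal π * l π true ≠ ⊤ :=
    ENNReal.mul_ne_top ENNReal.ofReal_ne_top (hfin true)
  have hne2 : ENNReal.ofReal (1 - π) * l π false ≠ ⊤ :=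
    ENNReal.mul_ne_top ENNReal.ofReal_ne_top (hfin false)
  have h3 := (ENNReal.toReal_le_toReal (by simp [ENNReal.add_ne_top, hne1, hne2])
    ENNReal.ofReal_ne_top).mpr h2
  rwa [ENNReal.toReal_add hne1 hne2, ENNReal.toReal_mul, ENNReal.toReal_mul,
    ENNReal.toReal_ofReal hπ0, ENNReal.toReal_ofReal hπ1,
    ENNReal.toReal_ofReal (add_nonneg (mul_nonneg hπ0 hy0) (mul_nonneg hπ1 hx0))] at h3

/-- The one-step supermartingale inequality: for an `η`-mixable proper loss function with
finite losses on `(0,1)`,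
`π·e^{η(λ(π,1)-λ(γ,1))} + (1-π)·e^{η(λ(π,0)-λ(γ,0))} ≤ 1` for `π, γ ∈ (0,1)`. -/
theorem one_step_supermartingale (l : ℝ → Bool → ℝ≥0∞) (η : ℝ) (hη : 0 < η)
    (hproper : IsProper l) (hmix : Mixable η l)
    (hcont : ∀ ω : Bool, ContinuousOn (fun γ : ℝ => l γ ω) (Icc (0:ℝ) 1))
    (hfin : ∀ γ ∈ Ioo (0:ℝ) 1, ∀ ω : Bool, l γ ω ≠ ⊤) :
    ∀ π ∈ Ioo (0:ℝ) 1, ∀ γ ∈ Ioo (0:ℝ) 1,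
      π * Real.exp (η * ((l π true).toReal - (l γ true).toReal)) +
        (1 - π) * Real.exp (η * ((l π false).toReal - (l γ false).toReal)) ≤ 1 := by
  intro π hπ γ hγ
  have hπ0 : (0:ℝ) < π := hπ.1
  have hπ1 : (0:ℝ) < 1 - π := by linarith [hπ.2]
  set a0 := (l π false).toReal with ha0
  set a1 := (l π true).toReal with ha1
  set c0 := (l γ false).toReal with hc0
  set c1 := (l γ true).toReal with hc1
  set A0 := Real.exp (-η * a0) with hA0
  set A1 := Real.exp (-η * a1) with hA1
  set C0 := Real.exp (-η * c0) with hC0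
  set C1 := Real.exp (-η * c1) with hC1
  -- the two endpoints are in the superprediction set
  have hPmem : ((a0, a1) : ℝ × ℝ) ∈ Superpred l := by
    refine ⟨ENNReal.toReal_nonneg, ENNReal.toReal_nonneg, π, ⟨hπ.1.le, hπ.2.le⟩, ?_, ?_⟩
    · exact (ENNReal.ofReal_toReal (hfin π hπ false)).ge
    · exact (ENNReal.ofReal_toReal (hfin π hπ true)).ge
  have hQmem : ((c0, c1) : ℝ × ℝ) ∈ Superpred l := by
    refine ⟨ENNReal.toReal_nonneg, ENNReal.toReal_nonneg, γ, ⟨hγ.1.le, hγ.2.le⟩, ?_, ?_⟩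
    · exact (ENNReal.ofReal_toReal (hfin γ hγ false)).ge
    · exact (ENNReal.ofReal_toReal (hfin γ hγ true)).ge
  -- the convex combination: for each t ∈ [0,1] we get a superprediction point
  set u : ℝ → ℝ := fun t => (1 - t) * A0 + t * C0 with hu
  set v : ℝ → ℝ := fun t => (1 - t) * A1 + t * C1 with hv
  have hA0pos : (0:ℝ) < A0 := by rw [hA0]; exact Real.exp_pos _
  have hA1pos : (0:ℝ) < A1 := by rw [hA1]; exact Real.exp_pos _
  have hC0pos : (0:ℝ) < C0 := by rw [hC0]; exact Real.exp_pos _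
  have hC1pos : (0:ℝ) < C1 := by rw [hC1]; exact Real.exp_pos _
  have hupos : ∀ t ∈ Icc (0:ℝ) 1, 0 < u t := by
    intro t ht
    show 0 < (1 - t) * A0 + t * C0
    rcases lt_or_eq_of_le ht.1 with h | h
    · exact add_pos_of_nonneg_of_pos
        (mul_nonneg (by linarith [ht.2]) hA0pos.le) (mul_pos h hC0pos)
    · rw [← h]; simpa using hA0pos
  have hvpos : ∀ t ∈ Icc (0:ℝ) 1, 0 < v t := by
    intro t ht
    show 0 < (1 - t) * A1 + t * C1
    rcases lt_or_eq_of_le ht.1 with h | h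
    · exact add_pos_of_nonneg_of_pos
        (mul_nonneg (by linarith [ht.2]) hA1pos.le) (mul_pos h hC1pos)
    · rw [← h]; simpa using hA1pos
  -- key inequality: for t ∈ (0,1],  π(C1-A1)/v t + (1-π)(C0-A0)/u t ≤ 0
  have hkey : ∀ t ∈ Ioc (0:ℝ) 1,
      π * ((C1 - A1) / v t) + (1 - π) * ((C0 - A0) / u t) ≤ 0 := by
    intro t ht
    have ht' : t ∈ Icc (0:ℝ) 1 := ⟨ht.1.le, ht.2⟩
    -- convexity gives a superprediction point (x, y) with e^{-ηx} = u t, e^{-ηy} = v t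
    have hmem := hmix ⟨(a0, a1), hPmem, rfl⟩ ⟨(c0, c1), hQmem, rfl⟩
      (by linarith [ht.2] : (0:ℝ) ≤ 1 - t) ht.1.le (by ring)
    obtain ⟨⟨x, y⟩, hsp, heq⟩ := hmem
    have hx' : Real.exp (-η * x) = u t := congrArg Prod.fst heq
    have hy' : Real.exp (-η * y) = v t := congrArg Prod.snd heq
    have hlogx : -η * x = Real.log (u t) := by rw [← hx', Real.log_exp]
    have hlogy : -η * y = Real.log (v t) := by rw [← hy', Real.log_exp]
    -- propriety lower bound
    have hprop := proper_key l hproper π hπ (hfin π hπ) hsp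
    -- turn it into F t ≤ F 0 with F t = π log (v t) + (1-π) log (u t)
    rw [← ha1, ← ha0] at hprop
    have hF : π * Real.log (v t) + (1 - π) * Real.log (u t) ≤
        π * (-η * a1) + (1 - π) * (-η * a0) := by
      rw [← hlogx, ← hlogy]
      nlinarith [mul_le_mul_of_nonneg_left hprop hη.le]
    have hlA0 : Real.log A0 = -η * a0 := Real.log_exp _
    have hlA1 : Real.log A1 = -η * a1 := Real.log_exp _
    -- log lower bound: log (v t) - log A1 ≥ (v t - A1)/ v t, etc.
    have hlb : ∀ (V W : ℝ), 0 < V → 0 < W → 1 - W / V ≤ Real.log V - Real.log W := by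
      intro V W hV hW
      have h := Real.one_sub_inv_le_log_of_pos (show 0 < V / W by positivity)
      rw [Real.log_div hV.ne' hW.ne'] at h
      have : (V / W)⁻¹ = W / V := by field_simp
      linarith [this ▸ h]
    have hut := hupos t ht'
    have hvt := hvpos t ht'
    have h1 := hlb (v t) A1 hvt hA1pos
    have h0 := hlb (u t) A0 hut hA0pos
    -- v t - A1 = t * (C1 - A1), u t - A0 = t * (C0 - A0)
    have hv_sub : v t - A1 = t * (C1 - A1) := by simp only [hv]; ring
    have hu_sub : u t - A0 = t * (C0 - A0) := by simp only [hu]; ring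
    have h1' : t * ((C1 - A1) / v t) ≤ Real.log (v t) - Real.log A1 := by
      have : 1 - A1 / v t = t * (C1 - A1) / v t := by
        field_simp; linarith [hv_sub]
      rw [mul_div_assoc] at this; linarith [this ▸ h1]
    have h0' : t * ((C0 - A0) / u t) ≤ Real.log (u t) - Real.log A0 := by
      have : 1 - A0 / u t = t * (C0 - A0) / u t := by
        field_simp; linarith [hu_sub]
      rw [mul_div_assoc] at this; linarith [this ▸ h0]
    -- combine
    have hcomb : t * (π * ((C1 - A1) / v t) + (1 - π) * ((C0 - A0) / u t)) ≤ 0 := by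
      rw [← hlA0, ← hlA1] at hF
      nlinarith [mul_le_mul_of_nonneg_left h1' hπ0.le,
        mul_le_mul_of_nonneg_left h0' hπ1.le, hF]
    by_contra hS
    exact absurd hcomb (not_le.mpr (mul_pos ht.1 (lt_of_not_ge hS)))
  -- take the limit t → 0⁺
  set h : ℝ → ℝ := fun t => π * ((C1 - A1) / v t) + (1 - π) * ((C0 - A0) / u t) with hh
  have hu0 : u 0 = A0 := by show (1-0) * A0 + 0 * C0 = A0; ring
  have hv0 : v 0 = A1 := by show (1-0) * A1 + 0 * C1 = A1; ring
  have hcu : Continuous u := by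
    rw [hu]
    exact ((continuous_const.sub continuous_id).mul continuous_const).add
      (continuous_id.mul continuous_const)
  have hcv : Continuous v := by
    rw [hv]
    exact ((continuous_const.sub continuous_id).mul continuous_const).add
      (continuous_id.mul continuous_const)
  have hcont0 : ContinuousAt h 0 := by
    rw [hh]
    exact (continuousAt_const.mul (continuousAt_const.div hcv.continuousAt
        (by rw [hv0]; exact hA1pos.ne'))).add
      (continuousAt_const.mul (continuousAt_const.div hcu.continuousAt
        (by rw [hu0]; exact hA0pos.ne')))
  have hlim : Filter.Tendsto h (nhdsWithin 0 (Ioi (0:ℝ))) (nhds (h 0)) :=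
    hcont0.tendsto.mono_left nhdsWithin_le_nhds
  have hev : ∀ᶠ t in nhdsWithin 0 (Ioi (0:ℝ)), h t ≤ 0 := by
    filter_upwards [Ioc_mem_nhdsGT_of_mem (⟨le_refl (0:ℝ), one_pos⟩ : (0:ℝ) ∈ Ico (0:ℝ) 1)]
      with t ht using hkey t ht
  have hh0 : h 0 ≤ 0 := le_of_tendsto hlim hev
  -- conclude
  have hfinal : π * ((C1 - A1) / A1) + (1 - π) * ((C0 - A0) / A0) ≤ 0 := by
    have := hh0; rw [hh] at this; simp only [hu0, hv0] at this; exact this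
  have e1 : Real.exp (η * (a1 - c1)) = C1 / A1 := by
    rw [hC1, hA1, ← Real.exp_sub]; congr 1; ring
  have e0 : Real.exp (η * (a0 - c0)) = C0 / A0 := by
    rw [hC0, hA0, ← Real.exp_sub]; congr 1; ring
  rw [e1, e0]
  have d1 : (C1 - A1) / A1 = C1 / A1 - 1 := by
    rw [sub_div, div_self hA1pos.ne']
  have d0 : (C0 - A0) / A0 = C0 / A0 - 1 := by
    rw [sub_div, div_self hA0pos.ne']
  rw [d1, d0] at hfinal
  linarith [hfinal]
end

section
/- Let λ be an η-mixable proper loss function, continuous in γ, with λ(π,0), λ(π,1) finite for π ∈ (0,1). Then for each π ∈ (0,1), the superprediction set Σ_λ lies Northeast of the shift of the curve e^{-ηx} + e^{-ηy} = 1 by the vector (λ(π,0) + (1/η)ln(1-π), λ(π,1) + (1/η)ln π); that is, every (x,y) ∈ Σ_λ satisfies (1-π)·e^{-η(x-λ(π,0))} + π·e^{-η(y-λ(π,1))} ≤ 1. -/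
open ENNReal Set

/-- Lemma 2 of the paper ("only if" direction): for an `η`-mixable proper loss function,
for each `π ∈ (0,1)` the superprediction set lies Northeast of the shift of
`e^{-ηx} + e^{-ηy} = 1` whose `π`-point is `(λ(π,0), λ(π,1))`; equivalently every
`(x,y) ∈ Σ_λ` satisfies `(1-π)·e^{-η(x-λ(π,0))} + π·e^{-η(y-λ(π,1))} ≤ 1`. -/
theorem superpred_northeast_of_pi_shift (l : ℝ → Bool → ℝ≥0∞) (η : ℝ) (hη : 0 < η)
    (hproper : IsProper l) (hmix : Mixable η l)
    (hcont : ∀ ω : Bool, ContinuousOn (fun γ : ℝ => l γ ω) (Icc (0:ℝ) 1))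
    (hfin : ∀ γ ∈ Ioo (0:ℝ) 1, ∀ ω : Bool, l γ ω ≠ ⊤) :
    ∀ π ∈ Ioo (0:ℝ) 1, ∀ p ∈ Superpred l,
      (1 - π) * Real.exp (-η * (p.1 - (l π false).toReal)) +
        π * Real.exp (-η * (p.2 - (l π true).toReal)) ≤ 1 := by
  intro π hπ p hp
  obtain ⟨hπ0, hπ1⟩ := hπ
  have hπIcc : π ∈ Set.Icc (0:ℝ) 1 := ⟨hπ0.le, hπ1.le⟩
  have hfa : l π false ≠ ⊤ := hfin π ⟨hπ0, hπ1⟩ false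
  have hfb : l π true ≠ ⊤ := hfin π ⟨hπ0, hπ1⟩ true
  set a := (l π false).toReal with ha
  set b := (l π true).toReal with hb
  have hPmem : ((a, b) : ℝ × ℝ) ∈ Superpred l := by
    refine ⟨ENNReal.toReal_nonneg, ENNReal.toReal_nonneg, π, hπIcc, ?_, ?_⟩
    · rw [ENNReal.ofReal_toReal hfa]
    · rw [ENNReal.ofReal_toReal hfb]
  -- key inequality from properness
  have key : ∀ q ∈ Superpred l, (1-π)*a + π*b ≤ (1-π)*q.1 + π*q.2 := by
    rintro q ⟨hq1, hq2, γ, hγ, h0, h1⟩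
    have hprop := hproper π hπIcc γ hγ
    have hle : ENNReal.ofReal (π * b + (1-π) * a) ≤
        ENNReal.ofReal (π * q.2 + (1-π) * q.1) := by
      rw [ENNReal.ofReal_add (mul_nonneg hπ0.le ENNReal.toReal_nonneg)
          (mul_nonneg (by linarith) ENNReal.toReal_nonneg),
        ENNReal.ofReal_add (mul_nonneg hπ0.le hq2) (mul_nonneg (by linarith) hq1),
        ENNReal.ofReal_mul hπ0.le, ENNReal.ofReal_mul (by linarith : (0:ℝ) ≤ 1-π),
        ENNReal.ofReal_mul hπ0.le, ENNReal.ofReal_mul (by linarith : (0:ℝ) ≤ 1-π),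
        ENNReal.ofReal_toReal hfb, ENNReal.ofReal_toReal hfa]
      exact hprop.trans (add_le_add (mul_le_mul_right h1 _) (mul_le_mul_right h0 _))
    have := (ENNReal.ofReal_le_ofReal_iff
      (by nlinarith : (0:ℝ) ≤ π * q.2 + (1-π) * q.1)).mp hle
    linarith
  set A1 := Real.exp (-η*a) with hA1
  set A2 := Real.exp (-η*b) with hA2
  set B1 := Real.exp (-η*p.1) with hB1
  set B2 := Real.exp (-η*p.2) with hB2
  have hPimg : ((A1, A2) : ℝ × ℝ) ∈
      ((fun p : ℝ × ℝ => (Real.exp (-η * p.1), Real.exp (-η * p.2))) '' Superpred l) :=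
    ⟨(a, b), hPmem, rfl⟩
  have hQimg : ((B1, B2) : ℝ × ℝ) ∈
      ((fun p : ℝ × ℝ => (Real.exp (-η * p.1), Real.exp (-η * p.2))) '' Superpred l) :=
    ⟨p, hp, rfl⟩
  set F : ℝ → ℝ := fun t =>
    -((1-π) * Real.log ((1-t)*A1 + t*B1) + π * Real.log ((1-t)*A2 + t*B2)) with hF
  have hF0 : F 0 = η * ((1-π)*a + π*b) := by
    simp only [hF, hA1, hA2]
    rw [show (1-(0:ℝ))*A1 + 0*B1 = A1 by ring, show (1-(0:ℝ))*A2 + 0*B2 = A2 by ring,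
      hA1, hA2, Real.log_exp, Real.log_exp]
    ring
  have hseg : ∀ t ∈ Set.Icc (0:ℝ) 1, F 0 ≤ F t := by
    intro t ht
    obtain ⟨q, hqS, hqE⟩ := hmix hPimg hQimg (by linarith [ht.2] : (0:ℝ) ≤ 1 - t) ht.1
      (by ring)
    have h1 : Real.exp (-η * q.1) = (1-t)*A1 + t*B1 := by
      have := congrArg Prod.fst hqE
      simpa [smul_eq_mul] using this
    have h2 : Real.exp (-η * q.2) = (1-t)*A2 + t*B2 := by
      have := congrArg Prod.snd hqE
      simpa [smul_eq_mul] using this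
    have hl1 : Real.log ((1-t)*A1 + t*B1) = -η * q.1 := by rw [← h1, Real.log_exp]
    have hl2 : Real.log ((1-t)*A2 + t*B2) = -η * q.2 := by rw [← h2, Real.log_exp]
    have hk := key q hqS
    rw [hF0]
    simp only [hF, hl1, hl2]
    nlinarith [hk, hη]
  -- derivative of F at 0
  have hA1pos : (0:ℝ) < A1 := Real.exp_pos _
  have hA2pos : (0:ℝ) < A2 := Real.exp_pos _
  have hd1 : HasDerivAt (fun t : ℝ => (1-t)*A1 + t*B1) ((-1)*A1 + 1*B1) 0 := by
    exact (((hasDerivAt_id (0:ℝ)).const_sub 1).mul_const A1).add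
      ((hasDerivAt_id (0:ℝ)).mul_const B1)
  have hd2 : HasDerivAt (fun t : ℝ => (1-t)*A2 + t*B2) ((-1)*A2 + 1*B2) 0 := by
    exact (((hasDerivAt_id (0:ℝ)).const_sub 1).mul_const A2).add
      ((hasDerivAt_id (0:ℝ)).mul_const B2)
  have hne1 : (1-(0:ℝ))*A1 + 0*B1 ≠ 0 := by
    rw [show (1-(0:ℝ))*A1 + 0*B1 = A1 by ring]; exact hA1pos.ne'
  have hne2 : (1-(0:ℝ))*A2 + 0*B2 ≠ 0 := by
    rw [show (1-(0:ℝ))*A2 + 0*B2 = A2 by ring]; exact hA2pos.ne'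
  have hD : HasDerivAt F
      (-((1-π) * (((-1)*A1 + 1*B1)/((1-(0:ℝ))*A1 + 0*B1)) +
        π * (((-1)*A2 + 1*B2)/((1-(0:ℝ))*A2 + 0*B2)))) 0 := by
    exact (((hd1.log hne1).const_mul (1-π)).add ((hd2.log hne2).const_mul π)).neg
  set fv : ℝ := (1-π) * (B1/A1) + π * (B2/A2) with hfv
  have hDval : (-((1-π) * (((-1)*A1 + 1*B1)/((1-(0:ℝ))*A1 + 0*B1)) +
        π * (((-1)*A2 + 1*B2)/((1-(0:ℝ))*A2 + 0*B2)))) = 1 - fv := by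
    rw [hfv]; field_simp [hA1pos.ne', hA2pos.ne']; ring
  rw [hDval] at hD
  -- slope argument
  have hslope : Filter.Tendsto (slope F 0) (nhdsWithin 0 (Set.Ioi 0)) (nhds (1 - fv)) :=
    (hasDerivAt_iff_tendsto_slope.mp hD).mono_left
      (nhdsWithin_mono 0 (fun x hx => ne_of_gt hx))
  have hev : ∀ᶠ t in nhdsWithin (0:ℝ) (Set.Ioi 0), 0 ≤ slope F 0 t := by
    filter_upwards [Ioc_mem_nhdsGT_of_mem (Set.left_mem_Ico.mpr zero_lt_one)] with t ht
    rw [slope_def_field]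
    apply div_nonneg
    · linarith [hseg t ⟨ht.1.le, ht.2⟩]
    · linarith [ht.1]
  have hfinal : (0:ℝ) ≤ 1 - fv := ge_of_tendsto hslope hev
  -- convert goal to fv
  have hg1 : Real.exp (-η * (p.1 - a)) = B1 / A1 := by
    rw [hB1, hA1, ← Real.exp_sub]; ring_nf
  have hg2 : Real.exp (-η * (p.2 - b)) = B2 / A2 := by
    rw [hB2, hA2, ← Real.exp_sub]; ring_nf
  rw [hg1, hg2]
  rw [hfv] at hfinal
  linarith
end

section
/- Let S be a forecast-continuous game-theoretic supermartingale. For any history h = (e₁,π₁,ω₁,...,e_{T-1},π_{T-1},ω_{T-1}) and any e_T ∈ E, there exists π ∈ [0,1] such that for both ω = 0 and ω = 1, S(h, e_T, π, ω) ≤ S(h). -/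
open Set

/-- A game-theoretic supermartingale with values in `(-∞,∞]`. -/
def IsSupermartingale {E : Type*} (S : List (E × ℝ × Bool) → EReal) : Prop :=
  ∀ (h : List (E × ℝ × Bool)) (e : E), ∀ π ∈ Set.Icc (0:ℝ) 1,
    (π : EReal) * S (h ++ [(e, π, true)]) +
      ((1 - π : ℝ) : EReal) * S (h ++ [(e, π, false)]) ≤ S h

/-- A function on histories is forecast-continuous if it is continuous in the last
prediction. -/
def ForecastContinuous {E : Type*} (S : List (E × ℝ × Bool) → EReal) : Prop :=
  ∀ (h : List (E × ℝ × Bool)) (e : E) (ω : Bool),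
    ContinuousOn (fun π : ℝ => S (h ++ [(e, π, ω)])) (Icc (0:ℝ) 1)

/-- Lemma 1 of the paper: for a forecast-continuous supermartingale, given any history and
any current expert move, there is a prediction `π ∈ [0,1]` which precludes the
supermartingale from growing, whatever the outcome. -/
theorem exists_nonincreasing_prediction {E : Type*}
    (S : List (E × ℝ × Bool) → EReal)
    (hbot : ∀ h, S h ≠ ⊥)
    (hsm : IsSupermartingale S) (hfc : ForecastContinuous S)
    (h : List (E × ℝ × Bool)) (e : E) :
    ∃ π ∈ Icc (0:ℝ) 1,
      S (h ++ [(e, π, false)]) ≤ S h ∧ S (h ++ [(e, π, true)]) ≤ S h := by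
  rcases eq_or_ne (S h) ⊤ with htop | htop
  · exact ⟨0, ⟨le_refl 0, zero_le_one⟩, by simp [htop], by simp [htop]⟩
  -- S h is finite
  set f : ℝ → EReal := fun π => S (h ++ [(e, π, true)]) with hf
  set g : ℝ → EReal := fun π => S (h ++ [(e, π, false)]) with hg
  set A : Set ℝ := Icc (0:ℝ) 1 ∩ f ⁻¹' (Iic (S h)) with hA
  set B : Set ℝ := Icc (0:ℝ) 1 ∩ g ⁻¹' (Iic (S h)) with hB
  have hAclosed : IsClosed A :=
    (hfc h e true).preimage_isClosed_of_isClosed isClosed_Icc isClosed_Iic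
  have hBclosed : IsClosed B :=
    (hfc h e false).preimage_isClosed_of_isClosed isClosed_Icc isClosed_Iic
  have h1A : (1:ℝ) ∈ A := by
    have := hsm h e 1 ⟨zero_le_one, le_refl 1⟩
    simp only [one_mul, sub_self, EReal.coe_zero, zero_mul, add_zero, EReal.coe_one] at this
    exact ⟨⟨zero_le_one, le_refl 1⟩, this⟩
  have h0B : (0:ℝ) ∈ B := by
    have := hsm h e 0 ⟨le_refl 0, zero_le_one⟩
    simp only [EReal.coe_zero, zero_mul, sub_zero, EReal.coe_one, one_mul, zero_add] at this
    exact ⟨⟨le_refl 0, zero_le_one⟩, this⟩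
  have hcover : Icc (0:ℝ) 1 ⊆ A ∪ B := by
    intro π hπ
    by_contra hc
    have hcA : π ∉ A := fun h' => hc (Or.inl h')
    have hcB : π ∉ B := fun h' => hc (Or.inr h')
    have hfπ : S h < f π := by
      by_contra hle
      exact hcA ⟨hπ, not_lt.1 hle⟩
    have hgπ : S h < g π := by
      by_contra hle
      exact hcB ⟨hπ, not_lt.1 hle⟩
    obtain ⟨r, hr1, hr2⟩ := EReal.exists_between_coe_real hfπ
    obtain ⟨s, hs1, hs2⟩ := EReal.exists_between_coe_real hgπ
    -- real value of S h
    lift (S h) to ℝ using ⟨htop, hbot h⟩ with c hc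
    have hcr : c < r := by exact_mod_cast hr1
    have hcs : c < s := by exact_mod_cast hs1
    have hreal : c < π * r + (1 - π) * s := by
      have hm : c < min r s := lt_min hcr hcs
      nlinarith [mul_nonneg hπ.1 (sub_nonneg.2 (min_le_left r s)),
        mul_nonneg (sub_nonneg.2 hπ.2) (sub_nonneg.2 (min_le_right r s))]
    have key : ((c : ℝ) : EReal) < (π : EReal) * f π + ((1 - π : ℝ) : EReal) * g π := by
      calc ((c : ℝ) : EReal) < ((π * r + (1 - π) * s : ℝ) : EReal) := by
            exact_mod_cast hreal
        _ = (π : EReal) * (r : EReal) + ((1 - π : ℝ) : EReal) * (s : EReal) := by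
            push_cast; ring_nf
        _ ≤ (π : EReal) * f π + ((1 - π : ℝ) : EReal) * g π := by
            exact add_le_add
              (mul_le_mul_of_nonneg_left hr2.le (EReal.coe_nonneg.2 hπ.1))
              (mul_le_mul_of_nonneg_left hs2.le
                (EReal.coe_nonneg.2 (sub_nonneg.2 hπ.2)))
    exact absurd (hsm h e π hπ) (not_le.2 (hc ▸ key))
  have hconn : IsPreconnected (Icc (0:ℝ) 1) := isPreconnected_Icc
  have := isPreconnected_closed_iff.1 hconn A B hAclosed hBclosed hcover
    ⟨1, ⟨⟨zero_le_one, le_refl 1⟩, h1A⟩⟩ ⟨0, ⟨⟨le_refl 0, zero_le_one⟩, h0B⟩⟩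
  obtain ⟨π, hπIcc, hπA, hπB⟩ := this
  exact ⟨π, hπIcc, hπB.2, hπA.2⟩
end

section
/- Let η > 0 and let λ be η-mixable. For any k ≥ 1, weights u₁,...,u_k ≥ 0 summing to 1, and predictions γ₁,...,γ_k ∈ [0,1], there exists γ ∈ [0,1] such that for both ω = 0 and ω = 1: e^{-η·λ(γ,ω)} ≥ Σᵢ uᵢ·e^{-η·λ(γᵢ,ω)}. -/
open ENNReal Set Finset

/-- `x ↦ e^{-ηx}` on `[0,∞]`, with the convention `e^{-η·∞} = 0`. -/
noncomputable def expNeg (η : ℝ) (x : ℝ≥0∞) : ℝ :=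
  if x = ⊤ then 0 else Real.exp (-η * x.toReal)

/-- The superprediction set of a loss function, as a subset of `[0,∞]²`. -/
def SuperpredE (l : ℝ → Bool → ℝ≥0∞) : Set (ℝ≥0∞ × ℝ≥0∞) :=
  {p | ∃ γ ∈ Set.Icc (0:ℝ) 1, l γ false ≤ p.1 ∧ l γ true ≤ p.2}

/-- `l` is `η`-mixable if the image of its superprediction set under
`E_η(x,y) = (e^{-ηx}, e^{-ηy})` is convex. -/
def MixableE (η : ℝ) (l : ℝ → Bool → ℝ≥0∞) : Prop :=
  Convex ℝ ((fun p : ℝ≥0∞ × ℝ≥0∞ => (expNeg η p.1, expNeg η p.2)) '' SuperpredE l)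

lemma expNeg_anti (η : ℝ) (hη : 0 < η) {x y : ℝ≥0∞} (h : x ≤ y) :
    expNeg η y ≤ expNeg η x := by
  unfold expNeg
  split_ifs with hy hx hx
  · exact le_rfl
  · positivity
  · exact absurd (top_le_iff.mp (hx ▸ h)) hy
  · exact Real.exp_le_exp.mpr (by
      have := (ENNReal.toReal_le_toReal hx hy).mpr h
      nlinarith)

/-- Existence of a substitution function for an `η`-mixable loss function: any convex
mixture of the exponentiated losses of finitely many predictions is dominated by the
exponentiated loss of a single prediction. -/
theorem substitution_exists (l : ℝ → Bool → ℝ≥0∞) (η : ℝ) (hη : 0 < η)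
    (hmix : MixableE η l) (k : ℕ) (hk : 1 ≤ k)
    (u : Fin k → ℝ) (hu : ∀ i, 0 ≤ u i) (husum : ∑ i, u i = 1)
    (g : Fin k → ℝ) (hg : ∀ i, g i ∈ Icc (0:ℝ) 1) :
    ∃ γ ∈ Icc (0:ℝ) 1, ∀ ω : Bool,
      ∑ i, u i * expNeg η (l (g i) ω) ≤ expNeg η (l γ ω) := by
  set z : Fin k → ℝ × ℝ := fun i => (expNeg η (l (g i) false), expNeg η (l (g i) true))
  have hz : ∀ i ∈ Finset.univ, z i ∈
      (fun p : ℝ≥0∞ × ℝ≥0∞ => (expNeg η p.1, expNeg η p.2)) '' SuperpredE l := by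
    intro i _
    exact ⟨(l (g i) false, l (g i) true), ⟨g i, hg i, le_rfl, le_rfl⟩, rfl⟩
  have hsum := hmix.sum_mem (fun i _ => hu i) husum hz
  obtain ⟨p, ⟨γ, hγ, h0, h1⟩, hp⟩ := hsum
  refine ⟨γ, hγ, fun ω => ?_⟩
  have hfst : expNeg η p.1 = ∑ i, u i * expNeg η (l (g i) false) := by
    have := congrArg Prod.fst hp
    simpa [z, Finset.sum_apply, Prod.fst_sum, smul_eq_mul] using this
  have hsnd : expNeg η p.2 = ∑ i, u i * expNeg η (l (g i) true) := by
    have := congrArg Prod.snd hp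
    simpa [z, Prod.snd_sum, smul_eq_mul] using this
  cases ω
  · exact hfst ▸ expNeg_anti η hη h0
  · exact hsnd ▸ expNeg_anti η hη h1
end

section
/- Consider the Aggregating Algorithm for specialist (sleeping) experts with η-mixable loss λ, prior weights pⁿ > 0 summing to 1, and a substitution function Σ satisfying the mixability inequality. Then for the weights wⁿ_t updated as wⁿ_t = wⁿ_{t-1}·exp(η(λ(π_t,ω_t) - λ(γⁿ_t,ω_t))) when expert n is awake at step t and wⁿ_t = wⁿ_{t-1} otherwise, the total weight Σₙ wⁿ_t is non-increasing in t. -/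
open Finset

/-- In the Aggregating Algorithm for specialist (sleeping) experts, the total weight
`∑ₙ wⁿ_t` is non-increasing in `t`: at each step the prediction `π_t` obtained from a
substitution function satisfies the mixability inequality, the weights of awake experts
are multiplied by `e^{η(λ(π_t,ω_t)-λ(γⁿ_t,ω_t))}`, and sleeping experts keep their
weights. -/
theorem total_weight_nonincreasing (N : ℕ) (l : ℝ → Bool → ℝ) (η : ℝ) (hη : 0 < η)
    (p : Fin N → ℝ) (hp : ∀ n, 0 < p n) (hpsum : ∑ n, p n = 1)
    (A : ℕ → Finset (Fin N)) (hA : ∀ t, (A t).Nonempty)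
    (γ : ℕ → Fin N → ℝ) (ω : ℕ → Bool) (π : ℕ → ℝ)
    (w : ℕ → Fin N → ℝ)
    (hw0 : ∀ n, w 0 n = p n)
    (hsub : ∀ (t : ℕ) (b : Bool),
      ∑ n ∈ A t, (w t n / ∑ m ∈ A t, w t m) * Real.exp (-η * l (γ t n) b)
        ≤ Real.exp (-η * l (π t) b))
    (hupd : ∀ t n, w (t + 1) n =
      if n ∈ A t then w t n * Real.exp (η * (l (π t) (ω t) - l (γ t n) (ω t)))
      else w t n) :
    ∀ t : ℕ, ∑ n, w (t + 1) n ≤ ∑ n, w t n := by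

  have hwpos : ∀ t n, 0 < w t n := by
    intro t
    induction t with
    | zero => intro n; rw [hw0]; exact hp n
    | succ t ih =>
      intro n
      rw [hupd]
      split
      · exact mul_pos (ih n) (Real.exp_pos _)
      · exact ih n
  intro t
  have hS : 0 < ∑ m ∈ A t, w t m := Finset.sum_pos (fun m _ => hwpos t m) (hA t)
  have key : ∑ n ∈ A t, w t n * Real.exp (-η * l (γ t n) (ω t))
      ≤ (∑ m ∈ A t, w t m) * Real.exp (-η * l (π t) (ω t)) := by
    have h := hsub t (ω t)
    calc ∑ n ∈ A t, w t n * Real.exp (-η * l (γ t n) (ω t))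
        = (∑ m ∈ A t, w t m) *
          ∑ n ∈ A t, (w t n / ∑ m ∈ A t, w t m) * Real.exp (-η * l (γ t n) (ω t)) := by
          rw [Finset.mul_sum]
          refine Finset.sum_congr rfl fun n _ => ?_
          field_simp
      _ ≤ _ := mul_le_mul_of_nonneg_left h hS.le
  have hexp : Real.exp (η * l (π t) (ω t)) * Real.exp (-η * l (π t) (ω t)) = 1 := by
    rw [← Real.exp_add]
    rw [show η * l (π t) (ω t) + -η * l (π t) (ω t) = 0 by ring]
    exact Real.exp_zero
  have hstep : ∑ n ∈ A t, w (t + 1) n ≤ ∑ n ∈ A t, w t n := by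
    calc ∑ n ∈ A t, w (t + 1) n
        = Real.exp (η * l (π t) (ω t)) *
          ∑ n ∈ A t, w t n * Real.exp (-η * l (γ t n) (ω t)) := by
          rw [Finset.mul_sum]
          refine Finset.sum_congr rfl fun n hn => ?_
          rw [hupd t n, if_pos hn,
            show η * (l (π t) (ω t) - l (γ t n) (ω t))
              = η * l (π t) (ω t) + -η * l (γ t n) (ω t) by ring, Real.exp_add]
          ring
      _ ≤ Real.exp (η * l (π t) (ω t)) *
          ((∑ m ∈ A t, w t m) * Real.exp (-η * l (π t) (ω t))) :=
          mul_le_mul_of_nonneg_left key (Real.exp_pos _).le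
      _ = ∑ n ∈ A t, w t n := by rw [mul_left_comm, hexp, mul_one]
  have hsplit1 : ∑ n, w (t + 1) n
      = ∑ n ∈ A t, w (t + 1) n + ∑ n ∈ (A t)ᶜ, w (t + 1) n :=
    (Finset.sum_add_sum_compl (A t) _).symm
  have hsplit2 : ∑ n, w t n = ∑ n ∈ A t, w t n + ∑ n ∈ (A t)ᶜ, w t n :=
    (Finset.sum_add_sum_compl (A t) _).symm
  have hoff : ∑ n ∈ (A t)ᶜ, w (t + 1) n = ∑ n ∈ (A t)ᶜ, w t n := by
    refine Finset.sum_congr rfl fun n hn => ?_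
    rw [hupd t n, if_neg (Finset.mem_compl.mp hn)]
  rw [hsplit1, hsplit2, hoff]
  linarith
end

section
/- In the specialist-experts Aggregating Algorithm with η-mixable loss λ and uniform prior weights pⁿ = 1/N, for every T and every expert n, the learner's loss over the steps when expert n is awake satisfies Σ_{t ≤ T, n ∈ A_t} λ(π_t,ω_t) ≤ Σ_{t ≤ T, n ∈ A_t} λ(γⁿ_t,ω_t) + (ln N)/η. -/
open Finset

/-- Corollary 4 of the paper (with uniform prior): the Aggregating Algorithm for
specialist (sleeping) experts with an `η`-mixable loss guarantees, for every horizon `T`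
and every expert `n`, that the learner's cumulative loss over the steps when expert `n`
is awake exceeds expert `n`'s cumulative loss by at most `(ln N)/η`. -/
theorem specialist_regret_bound (N : ℕ) (hN : 0 < N) (l : ℝ → Bool → ℝ) (η : ℝ)
    (hη : 0 < η)
    (A : ℕ → Finset (Fin N)) (hA : ∀ t, (A t).Nonempty)
    (γ : ℕ → Fin N → ℝ) (ω : ℕ → Bool) (π : ℕ → ℝ)
    (w : ℕ → Fin N → ℝ)
    (hw0 : ∀ n, w 0 n = 1 / N)
    (hsub : ∀ (t : ℕ) (b : Bool),
      ∑ n ∈ A t, (w t n / ∑ m ∈ A t, w t m) * Real.exp (-η * l (γ t n) b)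
        ≤ Real.exp (-η * l (π t) b))
    (hupd : ∀ t n, w (t + 1) n =
      if n ∈ A t then w t n * Real.exp (η * (l (π t) (ω t) - l (γ t n) (ω t)))
      else w t n) :
    ∀ (T : ℕ) (n : Fin N),
      ∑ t ∈ (range T).filter (fun t => n ∈ A t), l (π t) (ω t)
        ≤ ∑ t ∈ (range T).filter (fun t => n ∈ A t), l (γ t n) (ω t)
          + Real.log N / η := by
  have hNR : (0:ℝ) < N := by exact_mod_cast hN
  -- positivity of weights
  have hpos : ∀ t n, 0 < w t n := by
    intro t
    induction t with
    | zero => intro n; rw [hw0]; positivity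
    | succ t ih =>
      intro n
      rw [hupd]
      split
      · exact mul_pos (ih n) (Real.exp_pos _)
      · exact ih n
  -- total weight is ≤ 1
  have hsum : ∀ t, ∑ n, w t n ≤ 1 := by
    intro t
    induction t with
    | zero =>
      simp only [hw0, Finset.sum_const, Finset.card_univ, Fintype.card_fin, nsmul_eq_mul]
      rw [mul_one_div, div_self (ne_of_gt hNR)]
    | succ t ih =>
      have hS : 0 < ∑ m ∈ A t, w t m :=
        Finset.sum_pos (fun m _ => hpos t m) (hA t)
      have key : ∑ n ∈ A t, w (t+1) n ≤ ∑ n ∈ A t, w t n := by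
        have h1 : ∑ n ∈ A t, w (t+1) n
            = Real.exp (η * l (π t) (ω t)) *
              ∑ n ∈ A t, w t n * Real.exp (-η * l (γ t n) (ω t)) := by
          rw [Finset.mul_sum]
          apply Finset.sum_congr rfl
          intro n hn
          rw [hupd, if_pos hn, mul_sub, Real.exp_sub]
          rw [neg_mul, Real.exp_neg]
          field_simp
        have h2 : ∑ n ∈ A t, w t n * Real.exp (-η * l (γ t n) (ω t))
            ≤ (∑ m ∈ A t, w t m) * Real.exp (-η * l (π t) (ω t)) := by
          have := hsub t (ω t)
          have h3 : ∑ n ∈ A t, (w t n / ∑ m ∈ A t, w t m) * Real.exp (-η * l (γ t n) (ω t))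
              = (∑ n ∈ A t, w t n * Real.exp (-η * l (γ t n) (ω t))) / (∑ m ∈ A t, w t m) := by
            rw [Finset.sum_div]
            apply Finset.sum_congr rfl
            intro n _; ring
          rw [h3, div_le_iff₀ hS] at this
          linarith [this]
        calc ∑ n ∈ A t, w (t+1) n
            = Real.exp (η * l (π t) (ω t)) *
              ∑ n ∈ A t, w t n * Real.exp (-η * l (γ t n) (ω t)) := h1
          _ ≤ Real.exp (η * l (π t) (ω t)) *
              ((∑ m ∈ A t, w t m) * Real.exp (-η * l (π t) (ω t))) := by
              exact mul_le_mul_of_nonneg_left h2 (Real.exp_pos _).le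
          _ = (∑ m ∈ A t, w t m) *
              (Real.exp (η * l (π t) (ω t)) * Real.exp (-η * l (π t) (ω t))) := by ring
          _ = ∑ m ∈ A t, w t m := by
              rw [← Real.exp_add]
              simp
      have hsplit : ∀ s : ℕ, ∑ n, w s n
          = ∑ n ∈ A t, w s n + ∑ n ∈ (univ \ A t), w s n := by
        intro s
        rw [Finset.sum_sdiff_eq_sub (Finset.subset_univ _)]
        ring
      have hcompl : ∑ n ∈ (univ \ A t), w (t+1) n = ∑ n ∈ (univ \ A t), w t n := by
        apply Finset.sum_congr rfl
        intro n hn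
        rw [Finset.mem_sdiff] at hn
        rw [hupd, if_neg hn.2]
      calc ∑ n, w (t+1) n
          = ∑ n ∈ A t, w (t+1) n + ∑ n ∈ (univ \ A t), w (t+1) n := hsplit (t+1)
        _ ≤ ∑ n ∈ A t, w t n + ∑ n ∈ (univ \ A t), w t n := by
            rw [hcompl]; linarith [key]
        _ = ∑ n, w t n := (hsplit t).symm
        _ ≤ 1 := ih
  -- closed form for the weight
  have hform : ∀ (T : ℕ) (n : Fin N), w T n = (1/N) *
      Real.exp (η * ∑ t ∈ (range T).filter (fun t => n ∈ A t),
        (l (π t) (ω t) - l (γ t n) (ω t))) := by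
    intro T n
    induction T with
    | zero => simp [hw0]
    | succ T ih =>
      rw [hupd]
      by_cases h : n ∈ A T
      · rw [if_pos h, ih]
        rw [Finset.range_add_one, Finset.filter_insert, if_pos h,
          Finset.sum_insert (by simp)]
        rw [mul_add, Real.exp_add]
        ring
      · rw [if_neg h, ih]
        rw [Finset.range_add_one, Finset.filter_insert, if_neg h]
  intro T n
  have hle : w T n ≤ 1 := by
    calc w T n ≤ ∑ m, w T m :=
          Finset.single_le_sum (fun m _ => (hpos T m).le) (Finset.mem_univ n)
      _ ≤ 1 := hsum T
  rw [hform T n] at hle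
  set D := ∑ t ∈ (range T).filter (fun t => n ∈ A t),
      (l (π t) (ω t) - l (γ t n) (ω t)) with hD
  have hexp : Real.exp (η * D) ≤ N := by
    rw [one_div] at hle
    have := mul_le_mul_of_nonneg_left hle hNR.le
    rw [← mul_assoc, mul_inv_cancel₀ (ne_of_gt hNR), one_mul, mul_one] at this
    exact this
  have hlog : η * D ≤ Real.log N := by
    rw [← Real.exp_le_exp, Real.exp_log hNR]
    exact hexp
  have hDle : D ≤ Real.log N / η := by
    rw [le_div_iff₀ hη]
    linarith [hlog]
  have hsplit : D = ∑ t ∈ (range T).filter (fun t => n ∈ A t), l (π t) (ω t)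
      - ∑ t ∈ (range T).filter (fun t => n ∈ A t), l (γ t n) (ω t) := by
    rw [hD, Finset.sum_sub_distrib]
  linarith [hDle, hsplit.symm.le]
end
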